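/- For a triangular algebra 𝔄 = Tri(A, M, B) with idempotent e = [[1_A,0],[0,0]] and f = 1 − e, the center satisfies Z(𝔄) = { c ∈ e𝔄e + f𝔄f : c·(exf) = (exf)·c for all x ∈ 𝔄 }. -/

import Mathlib

set_option linter.unusedSectionVars false

open MulOpposite TrivSqZeroExt Finset

section TriDef
variable (R A B M : Type*) [CommRing R] [Ring A] [Ring B] [Algebra R A] [Algebra R B]
  [AddCommGroup M] [Module R M] [Module A M] [Module Bᵐᵒᵖ M] [SMulCommClass A Bᵐᵒᵖ M]
  [IsScalarTower R A M] [IsScalarTower R Bᵐᵒᵖ M]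

/-- left action of `A × B` on `M` through the first factor -/
instance Tri.instModuleProd : Module (A × B) M := Module.compHom M (RingHom.fst A B)

/-- right action of `A × B` on `M` through the second factor -/
instance Tri.instModuleProdOp : Module (A × B)ᵐᵒᵖ M :=
  Module.compHom M (RingHom.op (RingHom.snd A B))

instance Tri.instSMulCommClass : SMulCommClass (A × B) (A × B)ᵐᵒᵖ M :=
  ⟨fun p q m => smul_comm p.1 (op (unop q).2) m⟩

instance Tri.instTowerL : IsScalarTower R (A × B) M :=
  ⟨fun r p m => show (r • p.1) • m = r • (p.1 • m) from smul_assoc r p.1 m⟩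

instance Tri.instTowerR : IsScalarTower R (A × B)ᵐᵒᵖ M :=
  ⟨fun r q m => show (op (r • (unop q).2)) • m = r • ((op (unop q).2) • m) by
    rw [MulOpposite.op_smul]; exact smul_assoc r (op (unop q).2) m⟩

/-- The triangular algebra `Tri(A, M, B)` of matrices `[[a, m],[0, b]]`. -/
abbrev Tri : Type _ := TrivSqZeroExt (A × B) M

variable {A B M}

/-- the matrix `[[a, m],[0, b]]` -/
def Tri.mk (a : A) (m : M) (b : B) : Tri A B M := ⟨(a, b), m⟩

end TriDef

section
variable {R A B M : Type*} [CommRing R] [Ring A] [Ring B] [Algebra R A] [Algebra R B]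
  [AddCommGroup M] [Module R M] [Module A M] [Module Bᵐᵒᵖ M] [SMulCommClass A Bᵐᵒᵖ M]
  [IsScalarTower R A M] [IsScalarTower R Bᵐᵒᵖ M]

@[simp] theorem Tri.fst_mk' (a : A) (m : M) (b : B) :
    TrivSqZeroExt.fst (Tri.mk a m b) = (a, b) := rfl

@[simp] theorem Tri.snd_mk' (a : A) (m : M) (b : B) :
    TrivSqZeroExt.snd (Tri.mk a m b) = m := rfl

/-- `Z(𝔄) = { c ∈ e𝔄e + f𝔄f : c·(exf) = (exf)·c for all x ∈ 𝔄 }` where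
`e = [[1,0],[0,0]]` and `f = 1 - e`. -/
theorem center_eq_diagonal_commuting_with_offdiagonal
    (faithA : ∀ a : A, (∀ m : M, a • m = 0) → a = 0)
    (faithB : ∀ b : B, (∀ m : M, op b • m = 0) → b = 0)
    (e : Tri A B M) (he : e = Tri.mk 1 0 0) (f : Tri A B M) (hf : f = 1 - e)
    (c : Tri A B M) :
    c ∈ Subring.center (Tri A B M) ↔
      (c = e * c * e + f * c * f ∧ ∀ x : Tri A B M, c * (e * x * f) = (e * x * f) * c) := by
  obtain ⟨a, m, b, rfl⟩ : ∃ a m b, c = Tri.mk a m b := ⟨c.fst.1, c.snd, c.fst.2, rfl⟩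
  have hsl : ∀ (p : A) (q : B) (n : M), ((p, q) : A × B) • n = p • n := fun _ _ _ => rfl
  have hsr : ∀ (p : A) (q : B) (n : M), (op ((p, q) : A × B)) • n = op q • n := fun _ _ _ => rfl
  have hfe : f = (⟨(0, 1), 0⟩ : Tri A B M) := by
    refine TrivSqZeroExt.ext ?_ ?_ <;>
      simp [hf, he, fst_sub, snd_sub, fst_one, snd_one, Prod.ext_iff] <;> simp [Tri.mk]
  have hexf : ∀ x : Tri A B M, e * x * f = Tri.mk 0 x.snd 0 := by
    intro x
    obtain ⟨⟨p, q⟩, n⟩ := x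
    rw [he, hfe]
    refine TrivSqZeroExt.ext ?_ ?_
    · show (((1 : A), (0 : B)) * ((p, q)) * ((0 : A), (1 : B)) : A × B) = (0, 0)
      simp [Prod.ext_iff]
    · show ((((1 : A), (0 : B)) * ((p, q)) : A × B) • (0 : M)
          + op (((0 : A), (1 : B)) : A × B) • ((((1 : A), (0 : B)) : A × B) • n
            + op ((p, q) : A × B) • (0 : M))) = n
      simp [hsl, hsr]
  have hdiag : ∀ z : Tri A B M, e * z * e + f * z * f = TrivSqZeroExt.inl z.fst := by
    intro z
    obtain ⟨⟨u, v⟩, w⟩ := z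
    rw [he, hfe]
    refine TrivSqZeroExt.ext ?_ ?_
    · show (((1 : A), (0 : B)) * ((u, v)) * ((1 : A), (0 : B)) : A × B)
          + (((0 : A), (1 : B)) * ((u, v)) * ((0 : A), (1 : B)) : A × B) = (u, v)
      simp [Prod.ext_iff]
    · show ((((1 : A), (0 : B)) * ((u, v)) : A × B) • (0 : M)
          + op (((1 : A), (0 : B)) : A × B) • ((((1 : A), (0 : B)) : A × B) • w
            + op ((u, v) : A × B) • (0 : M)))
          + ((((0 : A), (1 : B)) * ((u, v)) : A × B) • (0 : M)
          + op (((0 : A), (1 : B)) : A × B) • ((((0 : A), (1 : B)) : A × B) • w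
            + op ((u, v) : A × B) • (0 : M))) = 0
      simp [hsl, hsr]
  refine Subring.mem_center_iff.trans ?_
  constructor
  · intro h
    have hm : m = 0 := by
      have := congrArg TrivSqZeroExt.snd (h (Tri.mk 0 0 1))
      simpa [snd_mul, hsl, hsr] using this.symm
    have hab : ∀ n : M, a • n = op b • n := by
      intro n
      have := congrArg TrivSqZeroExt.snd (h (Tri.mk 0 n 0))
      simpa [snd_mul, hsl, hsr, hm] using this.symm
    subst hm
    refine ⟨(hdiag (TrivSqZeroExt.inl (a, b))).symm, fun x => ?_⟩
    rw [hexf]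
    refine TrivSqZeroExt.ext ?_ ?_
    · simp [fst_mul]
    · simp [snd_mul, hsl, hsr, hab]
  · rintro ⟨hc, hcomm⟩
    have hm : m = 0 := by
      have := congrArg TrivSqZeroExt.snd (hc.trans (hdiag _))
      simpa using this
    subst hm
    have hab : ∀ n : M, a • n = op b • n := by
      intro n
      have := hcomm (Tri.mk 0 n 0)
      rw [hexf] at this
      have := congrArg TrivSqZeroExt.snd this
      simpa [snd_mul, hsl, hsr] using this
    have ha : ∀ p : A, a * p = p * a := by
      intro p
      refine sub_eq_zero.mp (faithA _ fun n => ?_)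
      have : (a * p) • n = (p * a) • n := by
        calc (a * p) • n = a • (p • n) := mul_smul a p n
          _ = op b • (p • n) := hab _
          _ = p • (op b • n) := (smul_comm p (op b) n).symm
          _ = p • (a • n) := by rw [hab]
          _ = (p * a) • n := (mul_smul p a n).symm
      rw [sub_smul, this, sub_self]
    have hb : ∀ q : B, b * q = q * b := by
      intro q
      refine sub_eq_zero.mp (faithB _ fun n => ?_)
      have h1 : a • (op q • n) = op q • (op b • n) := by
        rw [smul_comm a (op q) n, hab]
      have h2 : a • (op q • n) = op b • (op q • n) := hab _
      have h3 : op (q * b) • n = op (b * q) • n := by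
        rw [op_mul, op_mul, mul_smul, mul_smul]
        exact h2.symm.trans h1
      rw [op_sub, sub_smul, h3, sub_self]
    intro g
    obtain ⟨p, n, q, rfl⟩ : ∃ p n q, g = Tri.mk p n q := ⟨g.fst.1, g.snd, g.fst.2, rfl⟩
    refine TrivSqZeroExt.ext ?_ ?_
    · simp [fst_mul, Prod.ext_iff, ha, hb]
    · simp [snd_mul, hsl, hsr, hab]

end
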